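/- Let P_δ = { z ∈ ℂ : |z^r − δ| < δ } for δ > 0 and r ≥ 1, let P be a connected component of P_δ, and define ψ(z) = 1/(r z^r) on P. Then ψ is a biholomorphism of P onto the right half-plane H_δ = { w ∈ ℂ : Re w > 1/(2rδ) }. -/

import Mathlib

open Complex Metric Set


noncomputable def ggg (r : ℕ) (w : ℂ) : ℂ := Complex.exp (Complex.log w / r)

lemma ggg_ne (r : ℕ) (w : ℂ) : ggg r w ≠ 0 := Complex.exp_ne_zero _

lemma ggg_pow {r : ℕ} (hr : 1 ≤ r) {w : ℂ} (hw : w ≠ 0) : ggg r w ^ r = w := by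
  have hrC : (r : ℂ) ≠ 0 := Nat.cast_ne_zero.mpr (by omega)
  rw [ggg, ← Complex.exp_nat_mul, mul_div_cancel₀ _ hrC, Complex.exp_log hw]

lemma disk_slit {δ : ℝ} (hδ : 0 < δ) {u : ℂ} (hu : ‖u - (δ:ℂ)‖ < δ) :
    u ∈ Complex.slitPlane := by
  rw [Complex.mem_slitPlane_iff]
  left
  have h1 : |u.re - δ| ≤ ‖u - (δ:ℂ)‖ := by
    simpa using Complex.abs_re_le_norm (u - (δ:ℂ))
  have h2 := abs_lt.mp (lt_of_le_of_lt h1 hu)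
  linarith [h2.1]

lemma disk_ne {δ : ℝ} (hδ : 0 < δ) {u : ℂ} (hu : ‖u - (δ:ℂ)‖ < δ) : u ≠ 0 :=
  Complex.slitPlane_ne_zero (disk_slit hδ hu)

theorem petal_main {r : ℕ} {δ : ℝ} (hr : 1 ≤ r) (hδ : 0 < δ) (z₀ : ℂ)
    (hz₀ : z₀ ∈ {z : ℂ | ‖z ^ r - (δ : ℂ)‖ < δ}) :
    connectedComponentIn {z : ℂ | ‖z ^ r - (δ : ℂ)‖ < δ} z₀ =
      {z : ℂ | ‖z ^ r - (δ : ℂ)‖ < δ ∧ z / ggg r (z ^ r) = z₀ / ggg r (z₀ ^ r)} := by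
  have hrC : (r : ℂ) ≠ 0 := Nat.cast_ne_zero.mpr (by omega)
  set U : Set ℂ := {z : ℂ | ‖z ^ r - (δ : ℂ)‖ < δ} with hU
  set F : ℂ → ℂ := fun z => z / ggg r (z ^ r) with hF
  set ζ : ℂ := F z₀ with hζ
  set S : Set ℂ := {z : ℂ | z ∈ U ∧ F z = ζ} with hS
  -- basic facts about U
  have hUmem : ∀ z ∈ U, z ^ r ≠ 0 ∧ z ^ r ∈ Complex.slitPlane := fun z hz =>
    ⟨disk_ne hδ hz, disk_slit hδ hz⟩
  have hUopen : IsOpen U := by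
    have : U = (fun z : ℂ => z ^ r - (δ:ℂ)) ⁻¹' (Metric.ball 0 δ) := by
      ext z; simp [hU, Metric.mem_ball, dist_eq_norm]
    rw [this]
    exact (Metric.isOpen_ball).preimage (by continuity)
  -- F maps U into roots of unity
  have hFroot : ∀ z ∈ U, (F z) ^ r = 1 := by
    intro z hz
    have h1 := (hUmem z hz).1
    have h2 := ggg_pow hr h1
    have hzne : z ≠ 0 := fun h => h1 (by simp [h, pow_eq_zero_iff (by omega : r ≠ 0)])
    rw [hF]
    simp only [div_pow, h2]
    exact div_self h1
  have hζroot : ζ ^ r = 1 := hFroot z₀ hz₀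
  have hζne : ζ ≠ 0 := fun h => by simp [h, zero_pow (by omega : r ≠ 0)] at hζroot
  -- reconstruction: z ∈ U → z = F z * ggg r (z^r)
  have hrecon : ∀ z ∈ U, z = F z * ggg r (z ^ r) := by
    intro z hz
    rw [hF, div_mul_cancel₀]
    exact ggg_ne r (z ^ r)
  -- S as an image
  have hSmem : ∀ z : ℂ, z ∈ S ↔ ∃ u : ℂ, ‖u - (δ:ℂ)‖ < δ ∧ z = ζ * ggg r u := by
    intro z
    constructor
    · rintro ⟨hzU, hzF⟩
      exact ⟨z ^ r, hzU, by rw [← hzF]; exact hrecon z hzU⟩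
    · rintro ⟨u, hu, rfl⟩
      have hune : u ≠ 0 := disk_ne hδ hu
      have hpow : (ζ * ggg r u) ^ r = u := by
        rw [mul_pow, hζroot, one_mul, ggg_pow hr hune]
      have hzU : ζ * ggg r u ∈ U := by rw [hU, mem_setOf_eq, hpow]; exact hu
      refine ⟨hzU, ?_⟩
      rw [hF]
      simp only [hpow]
      rw [mul_div_assoc, div_self (ggg_ne r u), mul_one]
  -- continuity of F on U
  have hFcont : ContinuousOn F U := by
    intro z hz
    apply ContinuousAt.continuousWithinAt
    have h2 := (hUmem z hz).2
    have hlog : ContinuousAt (fun w : ℂ => Complex.exp (Complex.log w / r)) (z ^ r) :=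
      Complex.continuous_exp.continuousAt.comp
        ((Complex.differentiableAt_log h2).continuousAt.div_const _)
    have hg : ContinuousAt (fun z : ℂ => ggg r (z ^ r)) z :=
      ContinuousAt.comp (f := fun z : ℂ => z ^ r) hlog (continuous_pow r).continuousAt
    exact (continuousAt_id.div hg (by simpa using ggg_ne r (z ^ r)))
  -- roots of unity form a finite set
  have hRfin : Set.Finite {η : ℂ | η ^ r = 1} := by
    have hp : (Polynomial.X ^ r - Polynomial.C (1:ℂ)) ≠ 0 :=
      Polynomial.X_pow_sub_C_ne_zero (by omega) 1
    have := Polynomial.finite_setOf_isRoot hp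
    refine this.subset ?_
    intro x hx
    simp only [Polynomial.IsRoot, Polynomial.eval_sub, Polynomial.eval_pow, Polynomial.eval_X,
      Polynomial.eval_C, mem_setOf_eq]
    rw [mem_setOf_eq] at hx
    rw [hx]; ring
  -- S is open
  have hSopen : IsOpen S := by
    rw [isOpen_iff_mem_nhds]
    intro z hzS
    have hzU := hzS.1
    -- isolate ζ among roots of unity
    have hcl : IsClosed ({η : ℂ | η ^ r = 1} \ {ζ}) := (hRfin.subset diff_subset).isClosed
    have hζnot : ζ ∉ {η : ℂ | η ^ r = 1} \ {ζ} := fun h => h.2 rfl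
    obtain ⟨ε, hε, hball⟩ := Metric.isOpen_iff.mp hcl.isOpen_compl ζ hζnot
    have hopen : IsOpen (U ∩ F ⁻¹' Metric.ball ζ ε) :=
      hFcont.isOpen_inter_preimage hUopen Metric.isOpen_ball
    have hmem : z ∈ U ∩ F ⁻¹' Metric.ball ζ ε := by
      refine ⟨hzU, ?_⟩
      simp [hzS.2, Metric.mem_ball, hε]
    refine Filter.mem_of_superset (hopen.mem_nhds hmem) ?_
    rintro w ⟨hwU, hwb⟩
    refine ⟨hwU, ?_⟩
    have hwroot : F w ∈ {η : ℂ | η ^ r = 1} := hFroot w hwU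
    have := hball hwb
    simp only [mem_compl_iff, mem_diff, mem_singleton_iff, not_and, not_not] at this
    exact this hwroot
  -- U \ S is open
  have hVopen : IsOpen (U ∩ F ⁻¹' {ζ}ᶜ) :=
    hFcont.isOpen_inter_preimage hUopen (isClosed_singleton.isOpen_compl)
  -- S is preconnected
  have hDconn : IsPreconnected {u : ℂ | ‖u - (δ:ℂ)‖ < δ} := by
    have : {u : ℂ | ‖u - (δ:ℂ)‖ < δ} = Metric.ball (δ:ℂ) δ := by
      ext u; simp [Metric.mem_ball, dist_eq_norm]
    rw [this]
    exact (convex_ball _ _).isPreconnected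
  have hSconn : IsPreconnected S := by
    have himg : S = (fun u => ζ * ggg r u) '' {u : ℂ | ‖u - (δ:ℂ)‖ < δ} := by
      ext z
      rw [hSmem z]
      constructor
      · rintro ⟨u, hu, rfl⟩; exact ⟨u, hu, rfl⟩
      · rintro ⟨u, hu, rfl⟩; exact ⟨u, hu, rfl⟩
    rw [himg]
    apply hDconn.image
    intro u hu
    apply ContinuousAt.continuousWithinAt
    exact continuousAt_const.mul (Complex.continuous_exp.continuousAt.comp
      (((Complex.differentiableAt_log (disk_slit hδ hu)).continuousAt).div_const _))
  have hz₀S : z₀ ∈ S := ⟨hz₀, rfl⟩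
  have hSsubU : S ⊆ U := fun z hz => hz.1
  -- two inclusions
  apply Set.Subset.antisymm
  · -- component ⊆ S
    have hconn := isPreconnected_connectedComponentIn (x := z₀) (F := U)
    have hsub : connectedComponentIn U z₀ ⊆ S ∪ (U ∩ F ⁻¹' {ζ}ᶜ) := by
      intro z hz
      have hzU := connectedComponentIn_subset U z₀ hz
      by_cases h : F z = ζ
      · exact Or.inl ⟨hzU, h⟩
      · exact Or.inr ⟨hzU, h⟩
    have hdisj : Disjoint S (U ∩ F ⁻¹' {ζ}ᶜ) := by
      rw [Set.disjoint_left]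
      rintro z ⟨_, hz2⟩ ⟨_, hz3⟩
      exact hz3 hz2
    have hne : (connectedComponentIn U z₀ ∩ S).Nonempty :=
      ⟨z₀, mem_connectedComponentIn hz₀, hz₀S⟩
    exact hconn.subset_left_of_subset_union hSopen hVopen hdisj hsub hne
  · exact hSconn.subset_connectedComponentIn hz₀S hSsubU


lemma disk_iff_halfplane {r : ℕ} (hr : 1 ≤ r) {δ : ℝ} (hδ : 0 < δ) (u : ℂ) :
    ‖u - (δ:ℂ)‖ < δ ↔ 1 / (2 * r * δ) < ((1:ℂ) / ((r:ℂ) * u)).re := by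
  have hrR : (0:ℝ) < r := by exact_mod_cast Nat.pos_of_ne_zero (by omega)
  by_cases hu : u = 0
  · subst hu
    simp only [mul_zero, div_zero, Complex.zero_re]
    constructor
    · intro h; simp [abs_of_pos hδ] at h
    · intro h; exfalso; have : 0 < 1 / (2 * r * δ) := by positivity
      linarith
  · have hns : 0 < Complex.normSq u := Complex.normSq_pos.mpr hu
    have lhs : ‖u - (δ:ℂ)‖ < δ ↔ Complex.normSq u < 2 * δ * u.re := by
      rw [show ‖u - (δ:ℂ)‖ < δ ↔ ‖u - (δ:ℂ)‖ ^ 2 < δ ^ 2 from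
        (pow_lt_pow_iff_left₀ (norm_nonneg _) hδ.le (by norm_num)).symm]
      rw [Complex.sq_norm]
      simp only [Complex.normSq_apply, Complex.sub_re, Complex.sub_im, Complex.ofReal_re,
        Complex.ofReal_im]
      constructor <;> intro h <;> nlinarith
    have rhs : ((1:ℂ) / ((r:ℂ) * u)).re = (r * u.re) / (r ^ 2 * Complex.normSq u) := by
      rw [one_div, Complex.inv_re, Complex.normSq_mul, Complex.mul_re]
      simp [Complex.normSq_natCast]
      ring_nf
    rw [lhs, rhs, div_lt_div_iff₀ (by positivity) (by positivity)]
    have hr2 : (0:ℝ) < (r:ℝ)^2 := by positivity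
    constructor <;> intro h
    · nlinarith [mul_lt_mul_of_pos_left h hr2]
    · nlinarith [mul_lt_mul_of_pos_left h (by positivity : (0:ℝ) < ((r:ℝ)^2)⁻¹), hr2.ne']

/-- let `P_δ = {z : |z^r − δ| < δ}` with `δ > 0`, `r ≥ 1`, let `P` be a
connected component of `P_δ`, and `ψ z = 1/(r z^r)`. Then `ψ` is a biholomorphism of
`P` onto the right half-plane `H_δ = {w : Re w > 1/(2rδ)}`. -/
theorem petal_biholomorphism (r : ℕ) (δ : ℝ) (hr : 1 ≤ r) (hδ : 0 < δ)
    (P : Set ℂ) (z₀ : ℂ) (hz₀ : z₀ ∈ {z : ℂ | ‖z ^ r - (δ : ℂ)‖ < δ})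
    (hP : P = connectedComponentIn {z : ℂ | ‖z ^ r - (δ : ℂ)‖ < δ} z₀) :
    DifferentiableOn ℂ (fun z : ℂ => 1 / ((r : ℂ) * z ^ r)) P ∧
    Set.BijOn (fun z : ℂ => 1 / ((r : ℂ) * z ^ r)) P {w : ℂ | 1 / (2 * r * δ) < w.re} ∧
    ∃ g : ℂ → ℂ, DifferentiableOn ℂ g {w : ℂ | 1 / (2 * r * δ) < w.re} ∧
      ∀ z ∈ P, g (1 / ((r : ℂ) * z ^ r)) = z := by
  have hrC : (r : ℂ) ≠ 0 := Nat.cast_ne_zero.mpr (by omega)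
  set ζ : ℂ := z₀ / ggg r (z₀ ^ r) with hζdef
  have hPS : P = {z : ℂ | ‖z ^ r - (δ:ℂ)‖ < δ ∧ z / ggg r (z ^ r) = ζ} := by
    rw [hP, petal_main hr hδ z₀ hz₀]
  -- basic facts
  have hz₀pne : z₀ ^ r ≠ 0 := disk_ne hδ hz₀
  have hζroot : ζ ^ r = 1 := by
    rw [hζdef, div_pow, ggg_pow hr hz₀pne, div_self hz₀pne]
  have hmemp : ∀ z ∈ P, z ^ r ≠ 0 ∧ z = ζ * ggg r (z ^ r) := by
    intro z hz
    rw [hPS, mem_setOf_eq] at hz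
    have h1 : z ^ r ≠ 0 := disk_ne hδ hz.1
    refine ⟨h1, ?_⟩
    rw [← hz.2, div_mul_cancel₀]
    exact ggg_ne r (z ^ r)
  have hhalfD : ∀ w : ℂ, 1 / (2 * r * δ) < w.re → ((r:ℂ) * w ≠ 0 ∧
      ‖((r:ℂ) * w)⁻¹ - (δ:ℂ)‖ < δ) := by
    intro w hw
    have h0 : 0 < 1 / (2 * r * δ) := by
      have hrR : (0:ℝ) < r := by exact_mod_cast Nat.pos_of_ne_zero (by omega)
      positivity
    have hwne : w ≠ 0 := by
      intro h; rw [h] at hw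
      simp only [Complex.zero_re] at hw
      linarith
    have hrw : (r:ℂ) * w ≠ 0 := mul_ne_zero hrC hwne
    refine ⟨hrw, ?_⟩
    rw [disk_iff_halfplane hr hδ]
    have : (1:ℂ) / ((r:ℂ) * ((r:ℂ) * w)⁻¹) = w := by field_simp
    rw [this]; exact hw
  refine ⟨?_, ⟨?_, ?_, ?_⟩, ?_⟩
  · -- differentiability of ψ
    intro z hz
    have h1 := (hmemp z hz).1
    exact (((differentiableAt_const (1:ℂ)).div
      ((differentiableAt_const _).mul (show DifferentiableAt ℂ (fun z : ℂ => z ^ r) z from differentiableAt_pow r))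
      (mul_ne_zero hrC h1))).differentiableWithinAt
  · -- MapsTo
    intro z hz
    rw [hPS, mem_setOf_eq] at hz
    have := (disk_iff_halfplane hr hδ (z ^ r)).mp hz.1
    exact this
  · -- InjOn
    intro z₁ hz₁ z₂ hz₂ h
    have h1 := hmemp z₁ hz₁
    have h2 := hmemp z₂ hz₂
    have h' : 1 / ((r:ℂ) * z₁ ^ r) = 1 / ((r:ℂ) * z₂ ^ r) := h
    have hps : z₁ ^ r = z₂ ^ r := by
      rw [one_div, one_div] at h'
      exact mul_left_cancel₀ hrC (inv_injective h')
    rw [h1.2, h2.2, hps]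
  · -- SurjOn
    intro w hw
    rw [mem_setOf_eq] at hw
    obtain ⟨hrw, hu⟩ := hhalfD w hw
    set u : ℂ := ((r:ℂ) * w)⁻¹ with hudef
    have hune : u ≠ 0 := disk_ne hδ hu
    refine ⟨ζ * ggg r u, ?_, ?_⟩
    · have hpow : (ζ * ggg r u) ^ r = u := by
        rw [mul_pow, hζroot, one_mul, ggg_pow hr hune]
      rw [hPS, mem_setOf_eq, hpow]
      refine ⟨hu, ?_⟩
      rw [mul_div_assoc, div_self (ggg_ne r u), mul_one]
    · show 1 / ((r:ℂ) * (ζ * ggg r u) ^ r) = w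
      rw [mul_pow, hζroot, one_mul, ggg_pow hr hune, hudef]
      field_simp
  · -- holomorphic inverse
    refine ⟨fun w => ζ * ggg r (((r:ℂ) * w)⁻¹), ?_, ?_⟩
    · intro w hw
      rw [mem_setOf_eq] at hw
      obtain ⟨hrw, hu⟩ := hhalfD w hw
      have hslit : ((r:ℂ) * w)⁻¹ ∈ Complex.slitPlane := disk_slit hδ hu
      have h1 : DifferentiableAt ℂ (fun w : ℂ => ((r:ℂ) * w)⁻¹) w :=
        ((differentiableAt_const _).mul differentiableAt_id).inv hrw
      have h2 : DifferentiableAt ℂ (fun w : ℂ => ζ * ggg r (((r:ℂ) * w)⁻¹)) w := by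
        unfold ggg
        exact (differentiableAt_const ζ).mul (((h1.clog hslit).div_const _).cexp)
      exact h2.differentiableWithinAt
    · intro z hz
      obtain ⟨h1, h2⟩ := hmemp z hz
      show ζ * ggg r (((r:ℂ) * (1 / ((r:ℂ) * z ^ r)))⁻¹) = z
      have : ((r:ℂ) * (1 / ((r:ℂ) * z ^ r)))⁻¹ = z ^ r := by field_simp
      rw [this, ← h2]
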